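/- The supremum of the explicit velocity over the closed unit ball blows up at the blowup time: the function t ↦ sup_{|x| ≤ 1} |v̄(t,x)| tends to +∞ as t → (T*)⁻; in particular sup_{|x| ≤ 1} |v̄(t,x)| ≥ 2|a|/(T*−t) for every t ∈ [0,T*). -/

import Mathlib

/-- Partial derivative of `f : ℝ³ → ℝ` in the `j`-th coordinate direction at `x`. -/
noncomputable def pd (f : (Fin 3 → ℝ) → ℝ) (j : Fin 3) (x : Fin 3 → ℝ) : ℝ :=
  deriv (fun s => f (Function.update x j s)) (x j)

/-- Laplacian of `f : ℝ³ → ℝ` at `x`. -/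
noncomputable def lap (f : (Fin 3 → ℝ) → ℝ) (x : Fin 3 → ℝ) : ℝ :=
  ∑ j : Fin 3, pd (fun y => pd f j y) j x

/-- The explicit blowup velocity field `v̄`. -/
noncomputable def vbar (T a k : ℝ) (t : ℝ) (x : Fin 3 → ℝ) : Fin 3 → ℝ :=
  ![a * x 0 / (T - t) + k * x 1 * (T - t) ^ (2 * a),
    a * x 1 / (T - t) - k * x 0 * (T - t) ^ (2 * a),
    -2 * a * x 2 / (T - t)]

/-- The explicit blowup magnetic field `H̄`. -/
noncomputable def Hbar (T a ab k : ℝ) (t : ℝ) (x : Fin 3 → ℝ) : Fin 3 → ℝ :=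
  ![ab * x 0 + 2 * ab * k * x 1 * x 2 * (T - t) ^ (2 * a + 1) / (4 * a + 1),
    ab * x 1 - 2 * ab * k * x 0 * x 2 * (T - t) ^ (2 * a + 1) / (4 * a + 1),
    -2 * ab * x 2]

lemma ball_compact : IsCompact {x : Fin 3 → ℝ | (x 0) ^ 2 + (x 1) ^ 2 + (x 2) ^ 2 ≤ 1} := by
  apply Metric.isCompact_of_isClosed_isBounded
  · exact isClosed_le (by fun_prop) continuous_const
  · apply Bornology.IsBounded.subset (Metric.isBounded_closedBall (x := (0 : Fin 3 → ℝ)) (r := 1))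
    intro x hx
    simp only [Set.mem_setOf_eq] at hx
    simp only [Metric.mem_closedBall, dist_zero_right]
    rw [pi_norm_le_iff_of_nonneg (by norm_num)]
    intro i
    have h : (x i)^2 ≤ 1 := by
      fin_cases i
      · show x 0 ^ 2 ≤ 1; nlinarith [sq_nonneg (x 1), sq_nonneg (x 2)]
      · show x 1 ^ 2 ≤ 1; nlinarith [sq_nonneg (x 0), sq_nonneg (x 2)]
      · show x 2 ^ 2 ≤ 1; nlinarith [sq_nonneg (x 0), sq_nonneg (x 1)]
    rw [Real.norm_eq_abs, ← Real.sqrt_one, ← Real.sqrt_sq_eq_abs]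
    exact Real.sqrt_le_sqrt (by linarith)

lemma key (T a k t : ℝ) (ht : t < T) :
    2 * |a| / (T - t) ≤ sSup ((fun x : Fin 3 → ℝ =>
        Real.sqrt ((vbar T a k t x 0) ^ 2 + (vbar T a k t x 1) ^ 2
          + (vbar T a k t x 2) ^ 2)) ''
      {x : Fin 3 → ℝ | (x 0) ^ 2 + (x 1) ^ 2 + (x 2) ^ 2 ≤ 1}) := by
  have hbdd : BddAbove ((fun x : Fin 3 → ℝ =>
        Real.sqrt ((vbar T a k t x 0) ^ 2 + (vbar T a k t x 1) ^ 2
          + (vbar T a k t x 2) ^ 2)) ''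
      {x : Fin 3 → ℝ | (x 0) ^ 2 + (x 1) ^ 2 + (x 2) ^ 2 ≤ 1}) := by
    apply IsCompact.bddAbove
    apply ball_compact.image
    simp only [vbar, Matrix.cons_val_zero, Matrix.cons_val_one, Matrix.head_cons,
      Matrix.cons_val_two, Matrix.tail_cons]
    fun_prop
  have hmem : (![0,0,1] : Fin 3 → ℝ) ∈ {x : Fin 3 → ℝ | (x 0) ^ 2 + (x 1) ^ 2 + (x 2) ^ 2 ≤ 1} := by
    show ((0:ℝ))^2 + (0:ℝ)^2 + (1:ℝ)^2 ≤ 1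
    norm_num
  have hle := le_csSup hbdd (Set.mem_image_of_mem _ hmem)
  refine le_trans (le_of_eq ?_) hle
  simp only [vbar, Matrix.cons_val_zero, Matrix.cons_val_one, Matrix.head_cons,
    Matrix.cons_val_two, Matrix.tail_cons]
  norm_num
  rw [Real.sqrt_sq_eq_abs, abs_div, abs_neg]
  congr 1
  · rw [abs_mul]; norm_num [mul_comm]
  · rw [abs_of_pos (by linarith)]

/-- the supremum of the Euclidean norm of the explicit velocity
over the closed unit ball blows up as `t → (T*)⁻`, and is bounded below by
`2|a|/(T−t)`. -/
theorem vbar_sup_blowup (T a k : ℝ) (hT : 0 < T) (hk : k ≠ 0) (ha : a ≠ 0) :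
    Filter.Tendsto
      (fun t : ℝ => sSup ((fun x : Fin 3 → ℝ =>
          Real.sqrt ((vbar T a k t x 0) ^ 2 + (vbar T a k t x 1) ^ 2
            + (vbar T a k t x 2) ^ 2)) ''
        {x : Fin 3 → ℝ | (x 0) ^ 2 + (x 1) ^ 2 + (x 2) ^ 2 ≤ 1}))
      (nhdsWithin T (Set.Iio T)) Filter.atTop ∧
    ∀ t ∈ Set.Ico (0 : ℝ) T,
      2 * |a| / (T - t) ≤ sSup ((fun x : Fin 3 → ℝ =>
          Real.sqrt ((vbar T a k t x 0) ^ 2 + (vbar T a k t x 1) ^ 2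
            + (vbar T a k t x 2) ^ 2)) ''
        {x : Fin 3 → ℝ | (x 0) ^ 2 + (x 1) ^ 2 + (x 2) ^ 2 ≤ 1}) := by
  constructor
  · have h1 : Filter.Tendsto (fun t : ℝ => T - t) (nhdsWithin T (Set.Iio T))
        (nhdsWithin 0 (Set.Ioi 0)) := by
      rw [tendsto_nhdsWithin_iff]
      constructor
      · have : Filter.Tendsto (fun t : ℝ => T - t) (nhds T) (nhds (T - T)) :=
          (tendsto_const_nhds.sub Filter.tendsto_id)
        simpa using this.mono_left nhdsWithin_le_nhds
      · exact Filter.eventually_of_mem self_mem_nhdsWithin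
          (fun t ht => by simp only [Set.mem_Iio] at ht; simpa using ht)
    have h2 : Filter.Tendsto (fun t : ℝ => (T - t)⁻¹) (nhdsWithin T (Set.Iio T))
        Filter.atTop := tendsto_inv_nhdsGT_zero.comp h1
    have h3 : Filter.Tendsto (fun t : ℝ => 2 * |a| / (T - t)) (nhdsWithin T (Set.Iio T))
        Filter.atTop := by
      have := h2.const_mul_atTop (by positivity : (0:ℝ) < 2 * |a|)
      simpa [div_eq_mul_inv] using this
    refine Filter.tendsto_atTop_mono' _ ?_ h3
    exact Filter.eventually_of_mem self_mem_nhdsWithin (fun t ht => key T a k t ht)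
  · intro t ht
    exact key T a k t ht.2
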